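/- Let λ ∈ ℂ, λ ≠ 0, and let ℓ : (0, ∞) → ℂ be the half line ℓ(s) = λs. Then for every a ∈ ℂ with a ∉ λ·[0, ∞), the variation number satisfies α(ℓ, a) = |arg(a/λ) − π| / (2π), where the argument is chosen in the interval [0, 2π]. -/

import Mathlib

open Filter Topology Set MeasureTheory
open scoped ENNReal Real

/-- The variation number `α(γ|_{(t₀,∞)}, a)` of a curve `γ` around `a`. -/
noncomputable def variation (γ : ℝ → ℂ) (t0 : ℝ) (a : ℂ) : ℝ≥0∞ :=
  ENNReal.ofReal (1 / (2 * Real.pi)) *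
    ∫⁻ t in Set.Ioi t0, ENNReal.ofReal |(deriv γ t / (γ t - a)).im|

/-- An admissible curve on `(t₀, ∞)`: injective, `C²`, nonvanishing derivative, and with
`|γ(t)| = t + O(1)`, `|γ'(t)| = 1 + O(1/t)`, `|γ''(t)| = O(1/t²)` as `t → ∞`. -/
def Admissible (t0 : ℝ) (γ : ℝ → ℂ) : Prop :=
  Set.InjOn γ (Set.Ioi t0) ∧ ContDiffOn ℝ 2 γ (Set.Ioi t0) ∧
  (∀ t ∈ Set.Ioi t0, deriv γ t ≠ 0) ∧
  (∃ c : ℝ, ∀ᶠ t in Filter.atTop, |‖γ t‖ - t| ≤ c) ∧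
  (∃ c : ℝ, ∀ᶠ t in Filter.atTop, |‖deriv γ t‖ - 1| ≤ c / t) ∧
  (∃ c : ℝ, ∀ᶠ t in Filter.atTop, ‖deriv (deriv γ) t‖ ≤ c / t ^ 2)

/-- The argument of a complex number chosen in the interval `[0, 2π]`. -/
noncomputable def arg2pi (z : ℂ) : ℝ :=
  if Complex.arg z < 0 then Complex.arg z + 2 * Real.pi else Complex.arg z


lemma arg_of_im_pos' {z : ℂ} (hz : 0 < z.im) :
    Complex.arg z = Real.pi / 2 - Real.arctan (z.re / z.im) := by
  have hz0 : z ≠ 0 := by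
    intro h; rw [h] at hz; simp at hz
  have h1 : Complex.arg z ∈ Set.Icc 0 Real.pi :=
    ⟨Complex.arg_nonneg_iff.2 hz.le, Complex.arg_le_pi z⟩
  have hI := Real.arctan_mem_Ioo (z.re / z.im)
  have h2 : Real.pi / 2 - Real.arctan (z.re / z.im) ∈ Set.Icc 0 Real.pi := by
    constructor <;> nlinarith [hI.1, hI.2]
  refine Real.injOn_cos h1 h2 ?_
  rw [Complex.cos_arg hz0, Real.cos_pi_div_two_sub, Real.sin_arctan]
  have habs : ‖z‖ = Real.sqrt (z.re ^ 2 + z.im ^ 2) := by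
    rw [Complex.norm_def, Complex.normSq_apply]; ring_nf
  have hpos : (0:ℝ) < z.re ^ 2 + z.im ^ 2 := by positivity
  have hA : (1 + (z.re / z.im) ^ 2) = (z.re ^ 2 + z.im ^ 2) / z.im ^ 2 := by
    field_simp; ring
  have hsq : Real.sqrt (1 + (z.re / z.im) ^ 2)
      = Real.sqrt (z.re ^ 2 + z.im ^ 2) / z.im := by
    rw [hA, Real.sqrt_div (by positivity), Real.sqrt_sq hz.le]
  rw [habs, hsq]
  have h0 : Real.sqrt (z.re ^ 2 + z.im ^ 2) ≠ 0 := by positivity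
  field_simp

lemma lintegral_halfline' (p c : ℝ) (hc : 0 < c) :
    ∫⁻ t in Set.Ioi (0:ℝ), ENNReal.ofReal (c / ((t - p) ^ 2 + c ^ 2)) =
      ENNReal.ofReal (Real.pi / 2 + Real.arctan (p / c)) := by
  set f : ℝ → ℝ := fun t => c / ((t - p) ^ 2 + c ^ 2) with hf
  set g : ℝ → ℝ := fun t => Real.arctan ((t - p) / c) with hg
  have hderiv : ∀ t, HasDerivAt g (f t) t := by
    intro t
    have h1 : HasDerivAt (fun t : ℝ => (t - p) / c) (1 / c) t :=
      ((hasDerivAt_id t).sub_const p).div_const c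
    have h2 := (Real.hasDerivAt_arctan ((t - p) / c)).comp t h1
    refine h2.congr_deriv ?_
    show _ = c / ((t - p) ^ 2 + c ^ 2)
    have hne : (t - p) ^ 2 + c ^ 2 ≠ 0 := by positivity
    field_simp
    ring
  have hcont : Continuous g := Real.continuous_arctan.comp (by continuity)
  have hpos : ∀ t, 0 ≤ f t := fun t => by positivity
  have htends : Tendsto g atTop (𝓝 (Real.pi / 2)) := by
    refine (Real.tendsto_arctan_atTop.mono_right nhdsWithin_le_nhds).comp ?_
    exact (tendsto_atTop_add_const_right _ (-p) tendsto_id).atTop_div_const hc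
  have hint : IntegrableOn f (Set.Ioi 0) :=
    integrableOn_Ioi_deriv_of_nonneg hcont.continuousWithinAt
      (fun x _ => hderiv x) (fun x _ => hpos x) htends
  rw [← MeasureTheory.ofReal_integral_eq_lintegral_ofReal hint (ae_of_all _ hpos)]
  rw [integral_Ioi_of_hasDerivAt_of_tendsto hcont.continuousWithinAt
      (fun x _ => hderiv x) hint htends]
  congr 1
  simp only [hg, zero_sub, neg_div, Real.arctan_neg]
  ring

/-- **The Variation Number of a Half Line.**
For the half line `ℓ(s) = λs` (`λ ≠ 0`) and every `a ∉ λ·[0,∞)`,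
`α(ℓ, a) = |arg(a/λ) - π|/(2π)` with the argument chosen in `[0, 2π]`. -/
theorem variation_number_half_line (l : ℂ) (hl : l ≠ 0) (a : ℂ)
    (ha : ∀ r : ℝ, 0 ≤ r → a ≠ l * (r : ℂ)) :
    variation (fun u : ℝ => l * (u : ℂ)) 0 a =
      ENNReal.ofReal (|arg2pi (a / l) - Real.pi| / (2 * Real.pi)) := by
  set b : ℂ := a / l with hb
  have hab : a = l * b := by rw [hb]; field_simp
  have hbr : ∀ r : ℝ, 0 ≤ r → b ≠ (r : ℂ) := fun r hr h =>
    ha r hr (by rw [hab, h])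
  have hderiv : ∀ t : ℝ, deriv (fun u : ℝ => l * (u : ℂ)) t = l := by
    intro t
    have h1 : HasDerivAt (fun u : ℝ => l * (u : ℂ)) (l * 1) t :=
      (Complex.ofRealCLM.hasDerivAt).const_mul l
    simpa using h1.deriv
  have hquot : ∀ t : ℝ, l / (l * (t : ℂ) - a) = ((t : ℂ) - b)⁻¹ := by
    intro t
    have h : l * (t : ℂ) - a = l * ((t : ℂ) - b) := by rw [hab]; ring
    rw [h, div_eq_mul_inv, mul_inv, ← mul_assoc, mul_inv_cancel₀ hl, one_mul]
  have him : ∀ t : ℝ, (((t : ℂ) - b)⁻¹).im = b.im / ((t - b.re) ^ 2 + b.im ^ 2) := by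
    intro t
    have h1 : ((t : ℂ) - b).im = -b.im := by simp
    have h2 : Complex.normSq ((t : ℂ) - b) = (t - b.re) ^ 2 + b.im ^ 2 := by
      rw [Complex.normSq_apply]; simp; ring
    rw [Complex.inv_im, h1, h2, neg_neg]
  have hinteg : ∀ t : ℝ,
      |(deriv (fun u : ℝ => l * (u : ℂ)) t / ((fun u : ℝ => l * (u : ℂ)) t - a)).im|
        = |b.im| / ((t - b.re) ^ 2 + |b.im| ^ 2) := by
    intro t
    simp only [hderiv]
    rw [hquot t, him t,
      abs_div, abs_of_nonneg (show (0:ℝ) ≤ (t - b.re) ^ 2 + b.im ^ 2 by positivity),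
      sq_abs]
  rw [variation]
  rw [setLIntegral_congr_fun measurableSet_Ioi (fun t _ => by rw [hinteg t])]
  rcases eq_or_ne b.im 0 with hbim | hbim
  · -- b is a negative real number
    have hbre : b.re < 0 := by
      by_contra h
      push_neg at h
      exact hbr b.re h (Complex.ext (by simp) (by simp [hbim]))
    have hargb : Complex.arg b = Real.pi := Complex.arg_eq_pi_iff.2 ⟨hbre, hbim⟩
    have harg2 : arg2pi b = Real.pi := by
      rw [arg2pi, hargb, if_neg (not_lt.2 Real.pi_pos.le)]
    simp [hbim, harg2]
  · have hc : 0 < |b.im| := abs_pos.2 hbim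
    rw [lintegral_halfline' b.re |b.im| hc]
    have key : |arg2pi b - Real.pi| = Real.pi / 2 + Real.arctan (b.re / |b.im|) := by
      rcases hbim.lt_or_gt with hneg | hpos
      · have hcb : |b.im| = -b.im := abs_of_neg hneg
        have hconj : Complex.arg ((starRingEnd ℂ) b)
            = Real.pi / 2 - Real.arctan (b.re / -b.im) := by
          have h := arg_of_im_pos' (z := (starRingEnd ℂ) b) (by simpa using neg_pos.2 hneg)
          simpa using h
        have hargconj : Complex.arg ((starRingEnd ℂ) b) = -Complex.arg b := by
          rw [Complex.arg_conj, if_neg]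
          rw [Complex.arg_eq_pi_iff]
          rintro ⟨-, h⟩; exact hbim h
        have harg : Complex.arg b = Real.arctan (b.re / -b.im) - Real.pi / 2 := by
          rw [hargconj] at hconj; linarith
        have hlt : Complex.arg b < 0 := Complex.arg_neg_iff.2 hneg
        have hI := Real.arctan_mem_Ioo (b.re / -b.im)
        rw [arg2pi, if_pos hlt, harg, hcb,
          abs_of_nonneg (by nlinarith [hI.1, Real.pi_pos])]
        ring
      · have harg := arg_of_im_pos' hpos
        have hge : 0 ≤ Complex.arg b := Complex.arg_nonneg_iff.2 hpos.le
        have hle := Complex.arg_le_pi b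
        rw [arg2pi, if_neg (not_lt.2 hge), abs_of_nonpos (by linarith),
          abs_of_pos hpos, harg]
        ring
    rw [key, ← ENNReal.ofReal_mul (by positivity)]
    rw [mul_comm, mul_one_div]
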